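/- For every p > 0 one has p·cosh p − sinh p > 0, and the function Y₃²(p) = (2 sinh p − p cosh p)/√(p cosh p − sinh p) is strictly decreasing on (0, ∞), with Y₃²(p) → +∞ as p → 0⁺ and Y₃²(p) → −∞ as p → +∞. -/

import Mathlib

open Real Set Filter Topology

noncomputable def Y32 (p : ℝ) : ℝ :=
  (2 * Real.sinh p - p * Real.cosh p) / Real.sqrt (p * Real.cosh p - Real.sinh p)

private lemma hasDerivAt_f (p : ℝ) :
    HasDerivAt (fun q : ℝ => q * Real.cosh q - Real.sinh q) (p * Real.sinh p) p := by
  have h := ((hasDerivAt_id p).mul (Real.hasDerivAt_cosh p)).sub (Real.hasDerivAt_sinh p)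
  refine h.congr_deriv ?_
  simp only [id_eq, one_mul]
  ring

private lemma f_pos {p : ℝ} (hp : 0 < p) : 0 < p * Real.cosh p - Real.sinh p := by
  have hmono : StrictMonoOn (fun q : ℝ => q * Real.cosh q - Real.sinh q) (Set.Ici 0) := by
    apply strictMonoOn_of_deriv_pos (convex_Ici 0)
    · exact ((continuous_id.mul Real.continuous_cosh).sub Real.continuous_sinh).continuousOn
    · intro x hx
      rw [interior_Ici, mem_Ioi] at hx
      rw [(hasDerivAt_f x).deriv]
      exact mul_pos hx (Real.sinh_pos_iff.2 hx)
  have := hmono (le_refl (0:ℝ)) hp.le hp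
  simpa using this

private lemma g_neg {p : ℝ} (hp : 0 < p) :
    2 * p * Real.cosh p - 2 * Real.sinh p - p ^ 2 * Real.sinh p < 0 := by
  have hderiv : ∀ x : ℝ, HasDerivAt
      (fun q : ℝ => 2 * q * Real.cosh q - 2 * Real.sinh q - q ^ 2 * Real.sinh q)
      (-(x ^ 2 * Real.cosh x)) x := by
    intro x
    have h1 : HasDerivAt (fun q : ℝ => 2 * q) 2 x := by
      simpa using (hasDerivAt_id x).const_mul (2:ℝ)
    have h2 : HasDerivAt (fun q : ℝ => q ^ 2) (2 * x) x := by
      simpa using hasDerivAt_pow 2 x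
    have h := ((h1.mul (Real.hasDerivAt_cosh x)).sub
      ((Real.hasDerivAt_sinh x).const_mul (2:ℝ))).sub (h2.mul (Real.hasDerivAt_sinh x))
    refine h.congr_deriv ?_
    ring
  have hmono : StrictAntiOn
      (fun q : ℝ => 2 * q * Real.cosh q - 2 * Real.sinh q - q ^ 2 * Real.sinh q)
      (Set.Ici 0) := by
    apply strictAntiOn_of_deriv_neg (convex_Ici 0)
    · exact Continuous.continuousOn (by continuity)
    · intro x hx
      rw [interior_Ici, mem_Ioi] at hx
      rw [(hderiv x).deriv]
      have : 0 < x ^ 2 * Real.cosh x :=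
        mul_pos (by positivity) (lt_of_lt_of_le one_pos (Real.one_le_cosh x))
      linarith
  have := hmono (le_refl (0:ℝ)) hp.le hp
  simpa using this

private lemma hasDerivAt_Y32 {p : ℝ} (hp : 0 < p) :
    HasDerivAt Y32
      (((Real.cosh p - p * Real.sinh p) * Real.sqrt (p * Real.cosh p - Real.sinh p) -
        (2 * Real.sinh p - p * Real.cosh p) *
          (p * Real.sinh p / (2 * Real.sqrt (p * Real.cosh p - Real.sinh p)))) /
        Real.sqrt (p * Real.cosh p - Real.sinh p) ^ 2) p := by
  have hfp := f_pos hp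
  have hN : HasDerivAt (fun q : ℝ => 2 * Real.sinh q - q * Real.cosh q)
      (Real.cosh p - p * Real.sinh p) p := by
    have h := ((Real.hasDerivAt_sinh p).const_mul (2:ℝ)).sub
      ((hasDerivAt_id p).mul (Real.hasDerivAt_cosh p))
    refine h.congr_deriv ?_
    simp only [id_eq, one_mul]
    ring
  have hD : HasDerivAt (fun q : ℝ => Real.sqrt (q * Real.cosh q - Real.sinh q))
      (p * Real.sinh p / (2 * Real.sqrt (p * Real.cosh p - Real.sinh p))) p :=
    (hasDerivAt_f p).sqrt hfp.ne'
  have hs : Real.sqrt (p * Real.cosh p - Real.sinh p) ≠ 0 :=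
    (Real.sqrt_pos.2 hfp).ne'
  exact hN.div hD hs

private lemma deriv_Y32_neg {p : ℝ} (hp : 0 < p) : deriv Y32 p < 0 := by
  rw [(hasDerivAt_Y32 hp).deriv]
  have hfp := f_pos hp
  set s := Real.sqrt (p * Real.cosh p - Real.sinh p) with hs_def
  have hs : 0 < s := Real.sqrt_pos.2 hfp
  have hs2 : s ^ 2 = p * Real.cosh p - Real.sinh p := Real.sq_sqrt hfp.le
  apply div_neg_of_neg_of_pos _ (by positivity)
  have key : (Real.cosh p - p * Real.sinh p) * s -
      (2 * Real.sinh p - p * Real.cosh p) * (p * Real.sinh p / (2 * s)) =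
      Real.cosh p * (2 * p * Real.cosh p - 2 * Real.sinh p - p ^ 2 * Real.sinh p) / (2 * s) := by
    field_simp
    linear_combination (2 * (Real.cosh p - p * Real.sinh p)) * hs2
  rw [key]
  apply div_neg_of_neg_of_pos _ (by positivity)
  have hg := g_neg hp
  have hc : (0:ℝ) < Real.cosh p := lt_of_lt_of_le one_pos (Real.one_le_cosh p)
  nlinarith

private lemma Y32_strictAntiOn : StrictAntiOn Y32 (Set.Ioi 0) := by
  apply strictAntiOn_of_deriv_neg (convex_Ioi 0)
  · intro x hx
    exact ((hasDerivAt_Y32 hx).continuousAt).continuousWithinAt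
  · intro x hx
    rw [interior_Ioi] at hx
    exact deriv_Y32_neg hx

private lemma cosh_lt_of_lt_one {p : ℝ} (hp0 : 0 < p) (hp1 : p ≤ 1) : Real.cosh p < 1.87 := by
  rw [Real.cosh_eq]
  have h1 : Real.exp p ≤ Real.exp 1 := Real.exp_le_exp.2 hp1
  have h2 : Real.exp 1 < 2.7182818286 := Real.exp_one_lt_d9
  have h3 : Real.exp (-p) < 1 := by
    rw [Real.exp_lt_one_iff]; linarith
  linarith

private lemma f_le_cube {p : ℝ} (hp0 : 0 < p) (hp1 : p ≤ 1) :
    p * Real.cosh p - Real.sinh p ≤ p ^ 3 := by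
  have hderiv : ∀ x : ℝ, HasDerivAt
      (fun q : ℝ => q ^ 3 - (q * Real.cosh q - Real.sinh q))
      (3 * x ^ 2 - x * Real.sinh x) x := by
    intro x
    have h := (hasDerivAt_pow 3 x).sub (hasDerivAt_f x)
    refine h.congr_deriv ?_
    norm_num
  have hmono : MonotoneOn (fun q : ℝ => q ^ 3 - (q * Real.cosh q - Real.sinh q))
      (Set.Icc 0 1) := by
    apply monotoneOn_of_deriv_nonneg (convex_Icc 0 1)
    · exact Continuous.continuousOn (by continuity)
    · intro x hx
      exact ((hderiv x).differentiableAt).differentiableWithinAt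
    · intro x hx
      rw [interior_Icc, mem_Ioo] at hx
      rw [(hderiv x).deriv]
      have hsinh : Real.sinh x ≤ x * Real.cosh x := by
        have := f_pos hx.1; linarith
      have hcosh : Real.cosh x < 1.87 := cosh_lt_of_lt_one hx.1 hx.2.le
      nlinarith [hx.1.le, sq_nonneg x]
  have := hmono (Set.mem_Icc.2 ⟨le_refl 0, zero_le_one⟩)
    (Set.mem_Icc.2 ⟨hp0.le, hp1⟩) hp0.le
  simp only [Real.cosh_zero, Real.sinh_zero] at this
  nlinarith [this]

private lemma Y32_lower_bound {p : ℝ} (hp0 : 0 < p) (hp1 : p < 1) :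
    (10 * Real.sqrt p)⁻¹ ≤ Y32 p := by
  have hfp := f_pos hp0
  have hsp : 0 < Real.sqrt p := Real.sqrt_pos.2 hp0
  have hcosh : Real.cosh p < 1.87 := cosh_lt_of_lt_one hp0 hp1.le
  have hsinh : p ≤ Real.sinh p := Real.self_le_sinh_iff.2 hp0.le
  have hN : p / 10 ≤ 2 * Real.sinh p - p * Real.cosh p := by nlinarith
  have hf3 : p * Real.cosh p - Real.sinh p ≤ p ^ 3 := f_le_cube hp0 hp1.le
  have hsf : Real.sqrt (p * Real.cosh p - Real.sinh p) ≤ p * Real.sqrt p := by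
    have h1 : Real.sqrt (p * Real.cosh p - Real.sinh p) ≤ Real.sqrt (p ^ 3) :=
      Real.sqrt_le_sqrt hf3
    have h2 : Real.sqrt (p ^ 3) = p * Real.sqrt p := by
      rw [show p ^ 3 = p ^ 2 * p by ring, Real.sqrt_mul (by positivity),
        Real.sqrt_sq hp0.le]
    linarith [h2 ▸ h1]
  have hsfpos : 0 < Real.sqrt (p * Real.cosh p - Real.sinh p) := Real.sqrt_pos.2 hfp
  have hmain : (p / 10) / (p * Real.sqrt p) ≤ Y32 p := by
    unfold Y32
    exact div_le_div₀ (by nlinarith) hN hsfpos hsf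
  have heq : (p / 10) / (p * Real.sqrt p) = (10 * Real.sqrt p)⁻¹ := by
    field_simp
  linarith [heq ▸ hmain]

private lemma Y32_upper_bound {p : ℝ} (hp : 4 ≤ p) : Y32 p ≤ -(Real.sqrt p / 2) := by
  have hp0 : (0:ℝ) < p := by linarith
  have hfp := f_pos hp0
  have hc : (0:ℝ) < Real.cosh p := lt_of_lt_of_le one_pos (Real.one_le_cosh p)
  have hsc : Real.sinh p < Real.cosh p := by
    have h := Real.cosh_sub_sinh p
    have := Real.exp_pos p
    nlinarith [Real.exp_pos (-p), Real.cosh_sub_sinh p]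
  have hN : 2 * Real.sinh p - p * Real.cosh p ≤ -(p / 2) * Real.cosh p := by
    nlinarith
  have hfle : p * Real.cosh p - Real.sinh p ≤ p * Real.cosh p := by
    have : 0 < Real.sinh p := Real.sinh_pos_iff.2 hp0
    linarith
  set s := Real.sqrt (p * Real.cosh p - Real.sinh p) with hs_def
  set t := Real.sqrt (p * Real.cosh p) with ht_def
  have hs : 0 < s := Real.sqrt_pos.2 hfp
  have ht : 0 < t := Real.sqrt_pos.2 (by positivity)
  have hst : s ≤ t := Real.sqrt_le_sqrt hfle
  have step1 : Y32 p ≤ (-(p / 2) * Real.cosh p) / s := by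
    unfold Y32
    exact (div_le_div_iff_of_pos_right hs).2 hN
  have step2 : (-(p / 2) * Real.cosh p) / s ≤ (-(p / 2) * Real.cosh p) / t := by
    have hpos : 0 < (p / 2) * Real.cosh p := by positivity
    have h2 : (p / 2) * Real.cosh p / t ≤ (p / 2) * Real.cosh p / s :=
      div_le_div_of_nonneg_left hpos.le hs hst
    have e1 : (-(p / 2) * Real.cosh p) / s = -((p / 2) * Real.cosh p / s) := by ring
    have e2 : (-(p / 2) * Real.cosh p) / t = -((p / 2) * Real.cosh p / t) := by ring
    rw [e1, e2]
    linarith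
  have step3 : (-(p / 2) * Real.cosh p) / t = -(t / 2) := by
    have hdiv : (p * Real.cosh p) / t = t := Real.div_sqrt
    calc (-(p / 2) * Real.cosh p) / t = -(((p * Real.cosh p) / t) / 2) := by ring
      _ = -(t / 2) := by rw [hdiv]
  have step4 : Real.sqrt p ≤ t := by
    apply Real.sqrt_le_sqrt
    nlinarith [Real.one_le_cosh p]
  calc Y32 p ≤ (-(p / 2) * Real.cosh p) / t := step1.trans step2
    _ = -(t / 2) := step3
    _ ≤ -(Real.sqrt p / 2) := by linarith

private lemma tendsto_sqrt_atTop' : Tendsto Real.sqrt atTop atTop := by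
  refine tendsto_atTop_atTop.2 fun b => ⟨b ^ 2, fun a ha => ?_⟩
  calc b ≤ |b| := le_abs_self b
    _ = Real.sqrt (b ^ 2) := (Real.sqrt_sq_eq_abs b).symm
    _ ≤ Real.sqrt a := Real.sqrt_le_sqrt ha

/-- For every `p > 0` one has `p·cosh p − sinh p > 0`, and
`Y₃²(p) = (2 sinh p − p cosh p)/√(p cosh p − sinh p)` is strictly decreasing on
`(0, ∞)`, tending to `+∞` as `p → 0⁺` and to `−∞` as `p → +∞`. -/
theorem Y32_strictAnti :
    (∀ p : ℝ, 0 < p → 0 < p * Real.cosh p - Real.sinh p) ∧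
    StrictAntiOn Y32 (Set.Ioi 0) ∧
    Tendsto Y32 (nhdsWithin 0 (Set.Ioi 0)) atTop ∧
    Tendsto Y32 atTop atBot := by
  refine ⟨fun p hp => f_pos hp, Y32_strictAntiOn, ?_, ?_⟩
  · -- limit at 0⁺
    have hsqrt : Tendsto Real.sqrt (𝓝[>] (0:ℝ)) (𝓝[>] (0:ℝ)) := by
      apply tendsto_nhdsWithin_of_tendsto_nhds_of_eventually_within
      · have h := Real.continuous_sqrt.tendsto 0
        simpa using h.mono_left nhdsWithin_le_nhds
      · filter_upwards [self_mem_nhdsWithin] with x hx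
        exact Real.sqrt_pos.2 hx
    have hinv : Tendsto (fun p : ℝ => (Real.sqrt p)⁻¹) (𝓝[>] (0:ℝ)) atTop :=
      tendsto_inv_nhdsGT_zero.comp hsqrt
    have hcm : Tendsto (fun p : ℝ => (10:ℝ)⁻¹ * (Real.sqrt p)⁻¹) (𝓝[>] (0:ℝ)) atTop :=
      hinv.const_mul_atTop (by norm_num)
    apply tendsto_atTop_mono' _ _ hcm
    filter_upwards [Ioo_mem_nhdsGT_of_mem (Set.mem_Ico.2 ⟨le_refl (0:ℝ), one_pos⟩)] with p hp
    have h := Y32_lower_bound hp.1 hp.2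
    rw [mul_inv] at h
    exact h
  · -- limit at +∞
    have hb : Tendsto (fun p : ℝ => -(Real.sqrt p / 2)) atTop atBot := by
      apply tendsto_neg_atTop_atBot.comp
      exact tendsto_sqrt_atTop'.atTop_div_const (by norm_num)
    apply tendsto_atBot_mono' _ _ hb
    filter_upwards [eventually_ge_atTop (4:ℝ)] with p hp
    exact Y32_upper_bound hp
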